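/- Let Γ be a group admitting an epimorphism φ : Γ → H onto a finitely generated free abelian group H such that ker(φ) is a finite p-group P. Then there exists a finite index subgroup F ≤ H and an injective group homomorphism Ψ : F × P → Γ such that: (1) Ψ restricted to P is the inclusion of P = ker(φ) into Γ; (2) the composition F → F × P → Γ → H maps F isomorphically onto F ⊆ H; and (3) the image of Ψ is a finite index normal subgroup of Γ. -/

import Mathlib

/-- Splitting lemma: if `φ : Γ → H` is an epimorphism onto a finitely generated free
abelian group whose kernel `P` is a finite `p`-group, then there is a finite index
subgroup `F ≤ H` and an injective homomorphism `Ψ : F × P → Γ` which is the inclusion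
on `P`, such that `φ ∘ Ψ` is the identity on `F`, and whose image is a finite index
normal subgroup of `Γ`. -/
private lemma aux_pow_comm {G : Type*} [Group G] (a b c : G) (h : a * b = b * a * c)
    (hca : Commute c a) : ∀ m : ℕ, a ^ m * b = b * a ^ m * c ^ m := by
  intro m
  induction m with
  | zero => simp
  | succ k ih =>
    have : a ^ (k+1) * b = a ^ k * (a * b) := by rw [pow_succ]; group
    rw [this, h, ← mul_assoc, ← mul_assoc, ih]
    have hca' : Commute (c ^ k) a := (hca.symm.pow_right k).symm
    calc b * a ^ k * c ^ k * a * c = b * a ^ k * (c ^ k * a) * c := by group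
      _ = b * a ^ k * (a * c ^ k) * c := by rw [hca'.eq]
      _ = b * a ^ (k+1) * c ^ (k+1) := by rw [pow_succ, pow_succ]; group

theorem stmt_6 (p : ℕ) (hp : p.Prime) (Γ : Type) [Group Γ]
    (H : Type) [CommGroup H] (hfree : ∃ r : ℕ, Nonempty (H ≃* Multiplicative (Fin r →₀ ℤ)))
    (φ : Γ →* H) (hsurj : Function.Surjective φ)
    [Finite φ.ker] (hker : ∃ n : ℕ, Nat.card φ.ker = p ^ n) :
    ∃ (F : Subgroup H) (Ψ : (F × φ.ker) →* Γ),
      F.index ≠ 0 ∧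
      Function.Injective Ψ ∧
      (∀ x : φ.ker, Ψ (1, x) = (x : Γ)) ∧
      (∀ f : F, φ (Ψ (f, 1)) = (f : H)) ∧
      Ψ.range.Normal ∧ Ψ.range.index ≠ 0 := by
  obtain ⟨r, ⟨e⟩⟩ := hfree
  -- the centralizer of the kernel, as kernel of the conjugation action
  set Γ' : Subgroup Γ := (MulAut.conjNormal (H := φ.ker)).ker with hΓ'def
  haveI : Finite (MulAut φ.ker) :=
    Finite.of_injective (fun a => (a : φ.ker → φ.ker)) DFunLike.coe_injective
  have hcommΓ' : ∀ g ∈ Γ', ∀ x ∈ φ.ker, Commute g x := by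
    intro g hg x hx
    have h1 : MulAut.conjNormal (H := φ.ker) g = 1 := hg
    have h2 : (MulAut.conjNormal (H := φ.ker) g ⟨x, hx⟩ : Γ) = x := by rw [h1]; rfl
    rw [MulAut.conjNormal_apply] at h2
    calc g * x = (g * x * g⁻¹) * g := by group
      _ = x * g := by rw [h2]
  set d : ℕ := Γ'.index with hddef
  have hd : d ≠ 0 := by
    rw [hddef, hΓ'def, Subgroup.index_ker]
    exact Nat.card_ne_zero.mpr ⟨inferInstance, inferInstance⟩
  set m : ℕ := Nat.card φ.ker with hmdef
  have hm : m ≠ 0 := Nat.card_ne_zero.mpr ⟨inferInstance, inferInstance⟩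
  set n : ℕ := d * m with hndef
  have hn : n ≠ 0 := Nat.mul_ne_zero hd hm
  -- kernel elements have order dividing m
  have hkerpow : ∀ x ∈ φ.ker, x ^ m = 1 := by
    intro x hx
    have : (⟨x, hx⟩ : φ.ker) ^ m = 1 := pow_card_eq_one'
    simpa using congrArg Subtype.val this
  -- basis of H and lifts
  set bH : Fin r → H := fun i => e.symm (Multiplicative.ofAdd (Finsupp.single i 1)) with hbH
  set γ₀ : Fin r → Γ := fun i => (hsurj (bH i)).choose with hγ₀def
  have hγ₀ : ∀ i, φ (γ₀ i) = bH i := fun i => (hsurj (bH i)).choose_spec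
  set a : Fin r → Γ := fun i => (γ₀ i) ^ d with hadef
  have haΓ' : ∀ i, a i ∈ Γ' := fun i => Γ'.pow_index_mem (γ₀ i)
  set t : Fin r → Γ := fun i => (a i) ^ m with htdef
  have htΓ' : ∀ i, t i ∈ Γ' := fun i => Γ'.pow_mem (haΓ' i) m
  -- pairwise commutation of the t i
  have hcommta : ∀ i j, Commute (t i) (a j) := by
    intro i j
    set c : Γ := (a i)⁻¹ * (a j)⁻¹ * a i * a j with hcdef
    have hcker : c ∈ φ.ker := by
      rw [MonoidHom.mem_ker, hcdef]
      simp only [map_mul, map_inv]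
      rw [mul_assoc, mul_comm (φ (a i)) (φ (a j))]
      group
    have hrel : a i * a j = a j * a i * c := by rw [hcdef]; group
    have hca : Commute c (a i) := ((hcommΓ' _ (haΓ' i) _ hcker)).symm
    have := aux_pow_comm (a i) (a j) c hrel hca m
    rw [hkerpow c hcker, mul_one] at this
    exact this
  have hcommt : ∀ i j, Commute (t i) (t j) := fun i j => (hcommta i j).pow_right m
  -- the commutative subgroup generated by the t i
  set K : Subgroup Γ := Subgroup.closure (Set.range t) with hKdef
  letI : CommGroup K := Subgroup.closureCommGroupOfComm (by
    rintro x ⟨i, rfl⟩ y ⟨j, rfl⟩; exact hcommt i j)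
  have hKΓ' : K ≤ Γ' := Subgroup.closure_le _ |>.mpr (by
    rintro x ⟨i, rfl⟩; exact htΓ' i)
  set τ : Fin r → K := fun i => ⟨t i, Subgroup.subset_closure ⟨i, rfl⟩⟩ with hτdef
  set σA : (Fin r →₀ ℤ) →+ Additive K :=
    Finsupp.liftAddHom (fun i => zmultiplesHom (Additive K) (Additive.ofMul (τ i))) with hσA
  set σ : Multiplicative (Fin r →₀ ℤ) →* K := AddMonoidHom.toMultiplicativeLeft σA with hσ
  set σ₀ : Multiplicative (Fin r →₀ ℤ) →* Γ := K.subtype.comp σ with hσ₀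
  have hσ₀single : ∀ (i : Fin r) (k : ℤ),
      σ₀ (Multiplicative.ofAdd (Finsupp.single i k)) = t i ^ k := by
    intro i k
    have h1 : σA (Finsupp.single i k) = k • Additive.ofMul (τ i) := by
      rw [hσA, Finsupp.liftAddHom_apply_single, zmultiplesHom_apply]
    show ((Additive.toMul (σA (Finsupp.single i k)) : K) : Γ) = t i ^ k
    rw [h1, toMul_zsmul, toMul_ofMul]
    push_cast
    rfl
  have hesymm_single : ∀ (i : Fin r) (k : ℤ),
      e.symm (Multiplicative.ofAdd (Finsupp.single i k)) = bH i ^ k := by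
    intro i k
    have h1 : Finsupp.single i k = k • Finsupp.single i (1:ℤ) := by
      rw [Finsupp.smul_single]; norm_num
    rw [h1, ofAdd_zsmul, map_zpow]
  have hφt : ∀ i, φ (t i) = bH i ^ (n : ℕ) := by
    intro i
    rw [htdef, hadef]
    simp only [map_pow, hγ₀, ← pow_mul]
    rfl
  have hφσ₀ : ∀ y : Fin r →₀ ℤ,
      φ (σ₀ (Multiplicative.ofAdd y)) = (e.symm (Multiplicative.ofAdd y)) ^ (n : ℕ) := by
    intro y
    induction y using Finsupp.induction_linear with
    | zero => simp
    | add f g hf hg =>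
      have : Multiplicative.ofAdd (f + g) =
          Multiplicative.ofAdd f * Multiplicative.ofAdd g := rfl
      rw [this, map_mul, map_mul, map_mul, hf, hg, mul_pow]
    | single i k =>
      rw [hσ₀single, hesymm_single, map_zpow, hφt, ← zpow_natCast, ← zpow_natCast,
        ← zpow_mul, ← zpow_mul, mul_comm]
  -- the n-th power map on H is injective
  have hpowinj : Function.Injective (powMonoidHom n : H →* H) := by
    intro x y hxy
    have h1 : (e x) ^ n = (e y) ^ n := by
      rw [← map_pow, ← map_pow]
      exact congrArg e hxy
    have h2 : n • Multiplicative.toAdd (e x) = n • Multiplicative.toAdd (e y) := by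
      rw [← toAdd_pow, ← toAdd_pow, h1]
    have h3 : Multiplicative.toAdd (e x) = Multiplicative.toAdd (e y) := by
      ext i
      have := congrArg (fun z => z i) h2
      simp only [Finsupp.smul_apply, nsmul_eq_mul] at this
      exact mul_left_cancel₀ (by exact_mod_cast hn : (n : ℤ) ≠ 0) this
    exact e.injective (Multiplicative.toAdd.injective h3)
  set F : Subgroup H := (powMonoidHom n : H →* H).range with hFdef
  set eF : H ≃* F := MonoidHom.ofInjective hpowinj with heF
  have heFcoe : ∀ h : H, (eF h : H) = h ^ n :=
    fun h => MonoidHom.ofInjective_apply hpowinj (x := h)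
  set s : F →* Γ := σ₀.comp (e.toMonoidHom.comp (eF.symm.toMonoidHom)) with hsdef
  have hsval : ∀ f : F, s f = σ₀ (e (eF.symm f)) := fun f => rfl
  have hφs : ∀ f : F, φ (s f) = (f : H) := by
    intro f
    rw [hsval]
    have h1 : e (eF.symm f) = Multiplicative.ofAdd (Multiplicative.toAdd (e (eF.symm f))) := rfl
    rw [h1, hφσ₀]
    rw [← h1, MulEquiv.symm_apply_apply]
    rw [← heFcoe, MulEquiv.apply_symm_apply]
  -- s lands in the centralizer of the kernel
  have hsK : ∀ f : F, s f ∈ K := fun f => (σ (e (eF.symm f))).2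
  have hscomm : ∀ (f : F) (x : φ.ker), Commute (s f) (x : Γ) :=
    fun f x => hcommΓ' _ (hKΓ' (hsK f)) _ x.2
  set Ψ : (F × φ.ker) →* Γ := MonoidHom.noncommCoprod s φ.ker.subtype hscomm with hΨ
  have hΨapply : ∀ (f : F) (x : φ.ker), Ψ (f, x) = s f * x := fun f x => rfl
  -- F has finite index: it is the kernel of reduction mod n
  haveI : NeZero n := ⟨hn⟩
  set ρA : (Fin r →₀ ℤ) →+ (Fin r → ZMod n) :=
    { toFun := fun x i => (x i : ZMod n),
      map_zero' := by funext i; simp,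
      map_add' := by intro x y; funext i; simp } with hρA
  set ρ : H →* Multiplicative (Fin r → ZMod n) :=
    (AddMonoidHom.toMultiplicative ρA).comp e.toMonoidHom with hρ
  have hρval : ∀ h : H,
      ρ h = Multiplicative.ofAdd (ρA (Multiplicative.toAdd (e h))) := fun h => rfl
  have hFker : F = ρ.ker := by
    ext h
    constructor
    · rintro ⟨g, rfl⟩
      have hz : ∀ z : Multiplicative (Fin r → ZMod n), z ^ n = 1 := by
        intro z
        have h0 : n • Multiplicative.toAdd z = 0 := by
          funext i
          simp [nsmul_eq_mul, ZMod.natCast_self]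
        rw [← ofAdd_toAdd z, ← ofAdd_nsmul, h0, ofAdd_zero]
      rw [MonoidHom.mem_ker]
      show ρ (g ^ n) = 1
      rw [map_pow, hz]
    · intro hker
      rw [MonoidHom.mem_ker, hρval] at hker
      have h0 : ρA (Multiplicative.toAdd (e h)) = 0 := by
        exact_mod_cast hker
      have hδ : ∀ i, (n : ℤ) ∣ Multiplicative.toAdd (e h) i := by
        intro i
        have := congrFun h0 i
        exact (ZMod.intCast_zmod_eq_zero_iff_dvd _ n).mp this
      set y : Fin r →₀ ℤ :=
        Finsupp.mapRange (fun z => z / n) (by simp) (Multiplicative.toAdd (e h)) with hy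
      have hny : n • y = Multiplicative.toAdd (e h) := by
        ext i
        rw [Finsupp.smul_apply, hy, Finsupp.mapRange_apply, nsmul_eq_mul]
        exact Int.mul_ediv_cancel' (hδ i)
      refine ⟨e.symm (Multiplicative.ofAdd y), ?_⟩
      show (e.symm (Multiplicative.ofAdd y)) ^ n = h
      apply e.injective
      rw [map_pow, MulEquiv.apply_symm_apply, ← ofAdd_nsmul, hny, ofAdd_toAdd]
  have hFindex : F.index ≠ 0 := by
    rw [hFker, Subgroup.index_ker]
    exact Nat.card_ne_zero.mpr ⟨inferInstance, inferInstance⟩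
  refine ⟨F, Ψ, ?_, ?_, ?_, ?_, ?_, ?_⟩
  · exact hFindex
  · -- injectivity
    rw [injective_iff_map_eq_one]
    rintro ⟨f, x⟩ h1
    rw [hΨapply] at h1
    have hx1 : φ (x : Γ) = 1 := MonoidHom.mem_ker.mp x.2
    have h2 : (f : H) = 1 := by
      have := congrArg φ h1
      rw [map_mul, hφs, hx1, mul_one, map_one] at this
      exact this
    have hf : f = 1 := by exact_mod_cast h2
    have h3 : (x : Γ) = 1 := by
      rw [hf, map_one, one_mul] at h1
      exact h1
    exact Prod.ext hf (by exact_mod_cast h3)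
  · intro x
    rw [hΨapply, map_one, one_mul]
  · intro f
    rw [hΨapply, OneMemClass.coe_one, mul_one, hφs]
  · -- normality of the range
    have hrange : Ψ.range = F.comap φ := by
      ext g
      constructor
      · rintro ⟨⟨f, x⟩, rfl⟩
        rw [Subgroup.mem_comap, hΨapply, map_mul, hφs, MonoidHom.mem_ker.mp x.2, mul_one]
        exact f.2
      · intro hg
        rw [Subgroup.mem_comap] at hg
        set f : F := ⟨φ g, hg⟩ with hfdef
        have hx : (s f)⁻¹ * g ∈ φ.ker := by
          rw [MonoidHom.mem_ker, map_mul, map_inv, hφs]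
          show (φ g)⁻¹ * φ g = 1
          group
        exact ⟨(f, ⟨(s f)⁻¹ * g, hx⟩), by rw [hΨapply]; group⟩
    rw [hrange]
    exact Subgroup.Normal.comap inferInstance φ
  · have hrange : Ψ.range = F.comap φ := by
      ext g
      constructor
      · rintro ⟨⟨f, x⟩, rfl⟩
        rw [Subgroup.mem_comap, hΨapply, map_mul, hφs, MonoidHom.mem_ker.mp x.2, mul_one]
        exact f.2
      · intro hg
        rw [Subgroup.mem_comap] at hg
        set f : F := ⟨φ g, hg⟩ with hfdef
        have hx : (s f)⁻¹ * g ∈ φ.ker := by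
          rw [MonoidHom.mem_ker, map_mul, map_inv, hφs]
          show (φ g)⁻¹ * φ g = 1
          group
        exact ⟨(f, ⟨(s f)⁻¹ * g, hx⟩), by rw [hΨapply]; group⟩
    rw [hrange, Subgroup.index_comap_of_surjective F hsurj]
    exact hFindex
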